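/- Let Z be a nonempty compact subset of ℝ^d, let σ > 0, and let κ_σ(z,u) = exp(−|z−u|²/(2σ²)) be the Gaussian kernel on Z × Z. If m is a finite signed Borel measure on Z such that ∫_Z κ_σ(z,u) m(du) = 0 for every z ∈ Z, then m = 0. Consequently, for every Borel probability measure μ on Z, the stationary-normalized kernel mean distance D_μ(ν,ν') := sup_{z∈Z} | (∫_Z κ_σ(z,u)(ν−ν')(du)) / (∫_Z κ_σ(z,u) μ(du)) | is a metric on the space of finite signed Borel measures on Z. -/

import Mathlib

open MeasureTheory

/-- Integral of a function against a finite signed measure, via the Jordan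
decomposition: `∫ f dν = ∫ f dν⁺ − ∫ f dν⁻`. -/
noncomputable def sintegral {Z : Type*} [MeasurableSpace Z]
    (s : MeasureTheory.SignedMeasure Z) (f : Z → ℝ) : ℝ :=
  (∫ x, f x ∂s.toJordanDecomposition.posPart) -
    ∫ x, f x ∂s.toJordanDecomposition.negPart

namespace GKDAux

open Real Finset

variable {d : ℕ} {Z : Set (EuclideanSpace ℝ (Fin d))}


lemma abs_coord_le_norm {d : ℕ} (x : EuclideanSpace ℝ (Fin d)) (i : Fin d) : |x i| ≤ ‖x‖ := by
  rw [EuclideanSpace.norm_eq]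
  have h1 : |x i| = Real.sqrt (‖x i‖ ^ 2) := by
    rw [Real.sqrt_sq_eq_abs, Real.norm_eq_abs, abs_abs]
  rw [h1]
  exact Real.sqrt_le_sqrt
    (Finset.single_le_sum (f := fun j => ‖x j‖ ^ 2) (fun j _ => by positivity) (Finset.mem_univ i))

lemma cont_integrable {X : Type*} [MeasurableSpace X] [TopologicalSpace X] [CompactSpace X]
    [OpensMeasurableSpace X] [T2Space X] (P : Measure X) [IsFiniteMeasure P]
    {f : X → ℝ} (hf : Continuous f) : Integrable f P :=
  hf.integrable_of_hasCompactSupport (HasCompactSupport.of_compactSpace f)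

/-- coordinate evaluation -/
noncomputable def ev (u : ↥Z) (i : Fin d) : ℝ := (u : EuclideanSpace ℝ (Fin d)) i

lemma ev_cont (i : Fin d) : Continuous fun u : ↥Z => ev u i :=
  (EuclideanSpace.proj (𝕜 := ℝ) i).continuous.comp continuous_subtype_val

/-- Gaussian weight -/
noncomputable def wt (σ : ℝ) (u : ↥Z) : ℝ := Real.exp (-(∑ i, ev u i ^ 2) / (2 * σ ^ 2))

lemma wt_cont (σ : ℝ) : Continuous (wt (Z := Z) σ) := by
  apply Real.continuous_exp.comp
  exact (continuous_finset_sum _ fun i _ => (ev_cont i).pow 2).neg.div_const _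

lemma wt_pos (σ : ℝ) (u : ↥Z) : 0 < wt σ u := Real.exp_pos _

lemma wt_le_one (σ : ℝ) (u : ↥Z) : wt σ u ≤ 1 := by
  rw [wt, Real.exp_le_one_iff]
  have h1 : (0:ℝ) ≤ ∑ i, ev u i ^ 2 := Finset.sum_nonneg fun i _ => sq_nonneg _
  have h2 : (0:ℝ) ≤ 2 * σ ^ 2 := by positivity
  rw [neg_div]
  have := div_nonneg h1 h2
  linarith

/-- inner product of coordinates -/
noncomputable def ip (z u : ↥Z) : ℝ := ∑ i, ev z i * ev u i

lemma ip_cont (z : ↥Z) : Continuous fun u => ip (Z := Z) z u :=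
  continuous_finset_sum _ fun i _ => continuous_const.mul (ev_cont i)

/-- monomial -/
noncomputable def mono {n : ℕ} (p : Fin n → Fin d) (u : ↥Z) : ℝ := ∏ j, ev u (p j)

lemma mono_cont {n : ℕ} (p : Fin n → Fin d) : Continuous (mono (Z := Z) p) :=
  continuous_finset_prod _ fun j _ => ev_cont (p j)

/-- weighted moment -/
noncomputable def momt (σ : ℝ) (A : Measure ↥Z) {n : ℕ} (p : Fin n → Fin d) : ℝ :=
  ∫ u, mono p u * wt σ u ∂A

lemma kernel_eq {σ : ℝ} (hσ : σ ≠ 0) (z u : ↥Z) :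
    Real.exp (-(dist z u) ^ 2 / (2 * σ ^ 2)) =
      wt σ z * (Real.exp (ip z u / σ ^ 2) * wt σ u) := by
  rw [wt, wt, ← Real.exp_add, ← Real.exp_add]
  congr 1
  have hd : (dist z u) ^ 2 = ∑ i, (ev z i - ev u i) ^ 2 := by
    rw [Subtype.dist_eq, EuclideanSpace.dist_eq, Real.sq_sqrt (by positivity)]
    refine Finset.sum_congr rfl fun i _ => ?_
    rw [Real.dist_eq, sq_abs]; rfl
  have hsum : ∑ i, (ev z i - ev u i) ^ 2
      = (∑ i, ev z i ^ 2) - 2 * ip z u + ∑ i, ev u i ^ 2 := by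
    rw [ip, Finset.mul_sum, ← Finset.sum_sub_distrib, ← Finset.sum_add_distrib]
    exact Finset.sum_congr rfl fun i _ => by ring
  rw [hd, hsum]
  have h2 : σ ^ 2 ≠ 0 := pow_ne_zero _ hσ
  field_simp
  ring

lemma exp_series (t : ℝ) : Real.exp t = ∑' n : ℕ, t ^ n / n.factorial := by
  rw [Real.exp_eq_exp_ℝ, NormedSpace.exp_eq_tsum_div]

lemma hpt {σ : ℝ} (z u : ↥Z) :
    Real.exp (ip z u / σ ^ 2) * wt σ u
      = ∑' n : ℕ, ((σ ^ 2)⁻¹ ^ n / n.factorial) * ip z u ^ n * wt σ u := by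
  rw [exp_series, ← tsum_mul_right]
  congr 1; funext n
  rw [div_pow]
  ring


noncomputable def cf (σ : ℝ) (n : ℕ) : ℝ := (σ ^ 2)⁻¹ ^ n / n.factorial

lemma cf_pos {σ : ℝ} (hσ : 0 < σ) (n : ℕ) : 0 < cf σ n := by
  rw [cf]; positivity

/-- index set for monomials of degree n -/
def SS (d n : ℕ) : Finset (Fin n → Fin d) := Fintype.piFinset fun _ => Finset.univ

lemma mem_SS {n : ℕ} (p : Fin n → Fin d) : p ∈ SS d n := by
  simp [SS]

lemma card_SS (d n : ℕ) : (SS d n).card = d ^ n := by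
  simp [SS]

lemma mono_abs_le {R : ℝ} (hR : ∀ (u : ↥Z) (i : Fin d), |ev u i| ≤ R)
    {n : ℕ} (p : Fin n → Fin d) (u : ↥Z) : |mono p u| ≤ R ^ n := by
  rw [mono, Finset.abs_prod]
  calc ∏ j, |ev u (p j)| ≤ ∏ _j : Fin n, R :=
        Finset.prod_le_prod (fun j _ => abs_nonneg _) (fun j _ => hR u (p j))
    _ = R ^ n := by simp

lemma ip_abs_le {R : ℝ} (hR : ∀ (u : ↥Z) (i : Fin d), |ev u i| ≤ R)
    (z u : ↥Z) : |ip z u| ≤ (d : ℝ) * R ^ 2 := by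
  rw [ip]
  calc |∑ i, ev z i * ev u i| ≤ ∑ i, |ev z i * ev u i| := Finset.abs_sum_le_sum_abs _ _
    _ ≤ ∑ _i : Fin d, R * R := Finset.sum_le_sum (fun i _ => by
        rw [abs_mul]
        exact mul_le_mul (hR z i) (hR u i) (abs_nonneg _) ((abs_nonneg _).trans (hR z i)))
    _ = (d : ℝ) * R ^ 2 := by simp [sq]

lemma wt_abs_le (σ : ℝ) (u : ↥Z) : |wt σ u| ≤ 1 := by
  rw [abs_of_pos (wt_pos σ u)]; exact wt_le_one σ u

lemma momt_abs_le [CompactSpace ↥Z] {R : ℝ} (hR : ∀ (u : ↥Z) (i : Fin d), |ev u i| ≤ R)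
    (σ : ℝ) (A : Measure ↥Z) [IsFiniteMeasure A] {n : ℕ} (p : Fin n → Fin d) :
    |momt σ A p| ≤ R ^ n * (A Set.univ).toReal := by
  rw [momt, ← Real.norm_eq_abs]
  calc ‖∫ u, mono p u * wt σ u ∂A‖ ≤ ∫ u, ‖mono p u * wt σ u‖ ∂A :=
        norm_integral_le_integral_norm _
    _ ≤ ∫ _u, R ^ n ∂A := by
        refine integral_mono (cont_integrable A ((mono_cont p).mul (wt_cont σ))).norm
          (integrable_const _) (fun u => ?_)
        rw [Real.norm_eq_abs, abs_mul]
        calc |mono p u| * |wt σ u| ≤ R ^ n * 1 :=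
              mul_le_mul (mono_abs_le hR p u) (wt_abs_le σ u) (abs_nonneg _)
                ((abs_nonneg _).trans (mono_abs_le hR p u))
          _ = R ^ n := mul_one _
    _ = R ^ n * (A Set.univ).toReal := by simp [mul_comm, measureReal_def]


lemma integral_series {X : Type*} [MeasurableSpace X] (P : Measure X) [IsFiniteMeasure P]
    (F : ℕ → X → ℝ) (hFi : ∀ n, Integrable (F n) P)
    (b : ℕ → ℝ) (hb : Summable b) (hFb : ∀ n x, |F n x| ≤ b n) :
    (∑' n, ∫ x, F n x ∂P) = ∫ x, (∑' n, F n x) ∂P ∧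
      Summable (fun n => ∫ x, F n x ∂P) := by
  have hnorm : ∀ n, ∫ x, ‖F n x‖ ∂P ≤ b n * (P Set.univ).toReal := by
    intro n
    calc ∫ x, ‖F n x‖ ∂P ≤ ∫ _x, b n ∂P := by
          refine integral_mono (hFi n).norm (integrable_const _) ?_
          intro x; simpa [Real.norm_eq_abs] using hFb n x
      _ = b n * (P Set.univ).toReal := by simp [mul_comm, measureReal_def]
  have hsum : Summable fun n => ∫ x, ‖F n x‖ ∂P := by
    refine Summable.of_nonneg_of_le (fun n => integral_nonneg fun x => norm_nonneg _)
      hnorm (hb.mul_right _)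
  exact ⟨(integral_tsum_of_summable_integral_norm hFi hsum).symm ▸
    (integral_tsum_of_summable_integral_norm hFi hsum),
    Summable.of_norm_bounded hsum (fun n => norm_integral_le_integral_norm _)⟩

lemma hinner [CompactSpace ↥Z] {σ : ℝ} (hσ : 0 < σ) {R : ℝ} (hRnn : 0 ≤ R)
    (hR : ∀ (u : ↥Z) (i : Fin d), |ev u i| ≤ R)
    (A : Measure ↥Z) [IsFiniteMeasure A] (z : ↥Z) :
    (∫ u, Real.exp (ip z u / σ ^ 2) * wt σ u ∂A)
      = ∑' n : ℕ, cf σ n * ∑ p ∈ SS d n, mono p z * momt σ A p := by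
  have h1 : (fun u : ↥Z => Real.exp (ip z u / σ ^ 2) * wt σ u)
      = fun u => ∑' n : ℕ, cf σ n * ip z u ^ n * wt σ u := by
    funext u; rw [hpt]; exact tsum_congr fun n => by rw [cf]
  rw [h1]
  have hFi : ∀ n : ℕ, Integrable (fun u : ↥Z => cf σ n * ip z u ^ n * wt σ u) A := fun n =>
    cont_integrable A ((continuous_const.mul ((ip_cont z).pow n)).mul (wt_cont σ))
  have hcfb : ∀ n : ℕ, cf σ n * ((d : ℝ) * R ^ 2) ^ n
      = ((d : ℝ) * R ^ 2 / σ ^ 2) ^ n / n.factorial := by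
    intro n
    rw [cf, div_eq_mul_inv ((d : ℝ) * R ^ 2), mul_pow]
    ring
  have hFb : ∀ (n : ℕ) (u : ↥Z), |cf σ n * ip z u ^ n * wt σ u|
      ≤ ((d : ℝ) * R ^ 2 / σ ^ 2) ^ n / n.factorial := by
    intro n u
    rw [abs_mul, abs_mul, ← hcfb n]
    have h2 : |ip z u ^ n| ≤ ((d : ℝ) * R ^ 2) ^ n := by
      rw [abs_pow]; exact pow_le_pow_left₀ (abs_nonneg _) (ip_abs_le hR z u) n
    have h4 : |cf σ n| = cf σ n := abs_of_pos (cf_pos hσ n)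
    rw [h4]
    calc cf σ n * |ip z u ^ n| * |wt σ u| ≤ cf σ n * ((d : ℝ) * R ^ 2) ^ n * 1 := by
          refine mul_le_mul (mul_le_mul le_rfl h2 (abs_nonneg _) (le_of_lt (cf_pos hσ n)))
            (wt_abs_le σ u) (abs_nonneg _) ?_
          exact mul_nonneg (le_of_lt (cf_pos hσ n)) (pow_nonneg (by positivity) n)
      _ = cf σ n * ((d : ℝ) * R ^ 2) ^ n := mul_one _
  obtain ⟨heq, -⟩ := integral_series A _ hFi _ (Real.summable_pow_div_factorial _) hFb
  rw [← heq]
  refine tsum_congr fun n => ?_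
  have hip_pow : ∀ u : ↥Z, ip z u ^ n = ∑ p ∈ SS d n, mono p z * mono p u := by
    intro u
    rw [ip, Finset.sum_pow', SS]
    exact Finset.sum_congr rfl fun p _ => by rw [mono, mono, ← Finset.prod_mul_distrib]
  have h5 : (fun u : ↥Z => cf σ n * ip z u ^ n * wt σ u)
      = fun u => ∑ p ∈ SS d n, (cf σ n * mono p z) * (mono p u * wt σ u) := by
    funext u; rw [hip_pow u, Finset.mul_sum, Finset.sum_mul]
    exact Finset.sum_congr rfl fun p _ => by ring
  rw [h5, integral_finset_sum _ (fun p _ => (cont_integrable A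
    (continuous_const.mul ((mono_cont p).mul (wt_cont σ))) :
      Integrable (fun u => cf σ n * mono p z * (mono p u * wt σ u)) A)), Finset.mul_sum]
  exact Finset.sum_congr rfl fun p _ => by rw [integral_const_mul, momt]; ring


lemma houter [CompactSpace ↥Z] {σ : ℝ} (hσ : 0 < σ) {R : ℝ} (hRnn : 0 ≤ R)
    (hR : ∀ (u : ↥Z) (i : Fin d), |ev u i| ≤ R)
    (A B : Measure ↥Z) [IsFiniteMeasure A] [IsFiniteMeasure B] :
    (∫ z, (∫ u, Real.exp (ip z u / σ ^ 2) * wt σ u ∂B) * wt σ z ∂A)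
        = (∑' n : ℕ, cf σ n * ∑ p ∈ SS d n, momt σ B p * momt σ A p)
      ∧ Summable (fun n : ℕ => cf σ n * ∑ p ∈ SS d n, momt σ B p * momt σ A p) := by
  set CB := (B Set.univ).toReal with hCBdef
  have hCB : 0 ≤ CB := ENNReal.toReal_nonneg
  have h1 : (fun z : ↥Z => (∫ u, Real.exp (ip z u / σ ^ 2) * wt σ u ∂B) * wt σ z)
      = fun z => ∑' n : ℕ, (cf σ n * ∑ p ∈ SS d n, mono p z * momt σ B p) * wt σ z := by
    funext z; rw [hinner hσ hRnn hR B z, ← tsum_mul_right]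
  rw [h1]
  have hFi : ∀ n : ℕ, Integrable
      (fun z : ↥Z => (cf σ n * ∑ p ∈ SS d n, mono p z * momt σ B p) * wt σ z) A := fun n =>
    cont_integrable A ((continuous_const.mul (continuous_finset_sum _ fun p _ =>
      (mono_cont p).mul continuous_const)).mul (wt_cont σ))
  have hterm : ∀ (n : ℕ) (z : ↥Z), |(cf σ n * ∑ p ∈ SS d n, mono p z * momt σ B p) * wt σ z|
      ≤ (((d : ℝ) * R ^ 2 / σ ^ 2) ^ n / n.factorial) * CB := by
    intro n z
    have hsum_b : |∑ p ∈ SS d n, mono p z * momt σ B p| ≤ (d : ℝ) ^ n * (R ^ n * (R ^ n * CB)) := by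
      calc |∑ p ∈ SS d n, mono p z * momt σ B p| ≤ ∑ p ∈ SS d n, |mono p z * momt σ B p| :=
            Finset.abs_sum_le_sum_abs _ _
        _ ≤ ∑ _p ∈ SS d n, R ^ n * (R ^ n * CB) := by
            refine Finset.sum_le_sum fun p _ => ?_
            rw [abs_mul]
            exact mul_le_mul (mono_abs_le hR p z) (momt_abs_le hR σ B p) (abs_nonneg _)
              (pow_nonneg hRnn n)
        _ = (d : ℝ) ^ n * (R ^ n * (R ^ n * CB)) := by
            rw [Finset.sum_const, card_SS, nsmul_eq_mul, Nat.cast_pow]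
    rw [abs_mul, abs_mul, abs_of_pos (cf_pos hσ n)]
    calc cf σ n * |∑ p ∈ SS d n, mono p z * momt σ B p| * |wt σ z|
        ≤ cf σ n * ((d : ℝ) ^ n * (R ^ n * (R ^ n * CB))) * 1 := by
          refine mul_le_mul (mul_le_mul le_rfl hsum_b (abs_nonneg _) (le_of_lt (cf_pos hσ n)))
            (wt_abs_le σ z) (abs_nonneg _) ?_
          exact mul_nonneg (le_of_lt (cf_pos hσ n)) (by positivity)
      _ = (((d : ℝ) * R ^ 2 / σ ^ 2) ^ n / n.factorial) * CB := by
          rw [cf, div_eq_mul_inv ((d : ℝ) * R ^ 2), mul_pow, mul_pow]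
          ring
  obtain ⟨heq, hsm⟩ := integral_series A _ hFi _
    ((Real.summable_pow_div_factorial _).mul_right CB) hterm
  have hper : ∀ n : ℕ, (∫ z, (cf σ n * ∑ p ∈ SS d n, mono p z * momt σ B p) * wt σ z ∂A)
      = cf σ n * ∑ p ∈ SS d n, momt σ B p * momt σ A p := by
    intro n
    have h2 : (fun z : ↥Z => (cf σ n * ∑ p ∈ SS d n, mono p z * momt σ B p) * wt σ z)
        = fun z => ∑ p ∈ SS d n, (cf σ n * momt σ B p) * (mono p z * wt σ z) := by
      funext z; rw [Finset.mul_sum, Finset.sum_mul]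
      exact Finset.sum_congr rfl fun p _ => by ring
    rw [h2, integral_finset_sum _ (fun p _ => (cont_integrable A
      (continuous_const.mul ((mono_cont p).mul (wt_cont σ))) :
        Integrable (fun z => cf σ n * momt σ B p * (mono p z * wt σ z)) A)), Finset.mul_sum]
    exact Finset.sum_congr rfl fun p _ => by simp only [momt, integral_const_mul]; ring
  constructor
  · rw [← heq]
    exact tsum_congr hper
  · exact hsm.congr hper


/-- the coordinate functions as continuous maps -/
noncomputable def coordCM (Z : Set (EuclideanSpace ℝ (Fin d))) (i : Fin d) : C(↥Z, ℝ) :=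
  ⟨fun u => ev u i, ev_cont i⟩

theorem measure_eq_of_kernel (hZc : IsCompact Z) {σ : ℝ} (hσ : 0 < σ)
    (P Q : Measure ↥Z) [IsFiniteMeasure P] [IsFiniteMeasure Q]
    (h : ∀ z : ↥Z, (∫ u, Real.exp (-(dist z u) ^ 2 / (2 * σ ^ 2)) ∂P)
        = ∫ u, Real.exp (-(dist z u) ^ 2 / (2 * σ ^ 2)) ∂Q) :
    P = Q := by
  haveI : CompactSpace ↥Z := isCompact_iff_compactSpace.mp hZc
  obtain ⟨R0, hR0⟩ := (Metric.isBounded_iff_subset_closedBall 0).mp hZc.isBounded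
  set R : ℝ := max R0 0 with hRdef
  have hRnn : (0:ℝ) ≤ R := le_max_right _ _
  have hR : ∀ (u : ↥Z) (i : Fin d), |ev u i| ≤ R := by
    intro u i
    refine (abs_coord_le_norm _ i).trans ?_
    have := hR0 u.2
    rw [Metric.mem_closedBall, dist_zero_right] at this
    exact this.trans (le_max_left _ _)
  -- step 1 : equality of the exponential-moment integrals
  have hsplit : ∀ z : ↥Z, (∫ u, Real.exp (ip z u / σ ^ 2) * wt σ u ∂P)
      = ∫ u, Real.exp (ip z u / σ ^ 2) * wt σ u ∂Q := by
    intro z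
    have hfac : ∀ (A : Measure ↥Z), (∫ u, Real.exp (-(dist z u) ^ 2 / (2 * σ ^ 2)) ∂A)
        = wt σ z * ∫ u, Real.exp (ip z u / σ ^ 2) * wt σ u ∂A := by
      intro A
      rw [← integral_const_mul]
      exact integral_congr_ae (Filter.Eventually.of_forall fun u => kernel_eq hσ.ne' z u)
    have h2 := h z
    rw [hfac P, hfac Q] at h2
    exact mul_left_cancel₀ (ne_of_gt (wt_pos σ z)) h2
  -- step 2 : equality of all weighted moments
  have hmomeq : ∀ (n : ℕ) (p : Fin n → Fin d), momt σ P p = momt σ Q p := by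
    have hPP := houter hσ hRnn hR P P
    have hPQ := houter hσ hRnn hR P Q
    have hQP := houter hσ hRnn hR Q P
    have hQQ := houter hσ hRnn hR Q Q
    have e1 : (∑' n : ℕ, cf σ n * ∑ p ∈ SS d n, momt σ P p * momt σ P p)
        = ∑' n : ℕ, cf σ n * ∑ p ∈ SS d n, momt σ Q p * momt σ P p := by
      rw [← hPP.1, ← hPQ.1]
      exact integral_congr_ae (Filter.Eventually.of_forall fun z => by dsimp only; rw [hsplit z])
    have e2 : (∑' n : ℕ, cf σ n * ∑ p ∈ SS d n, momt σ P p * momt σ Q p)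
        = ∑' n : ℕ, cf σ n * ∑ p ∈ SS d n, momt σ Q p * momt σ Q p := by
      rw [← hQP.1, ← hQQ.1]
      exact integral_congr_ae (Filter.Eventually.of_forall fun z => by dsimp only; rw [hsplit z])
    have hdiff : ∀ n : ℕ, (cf σ n * ∑ p ∈ SS d n, momt σ P p * momt σ P p)
          - (cf σ n * ∑ p ∈ SS d n, momt σ Q p * momt σ P p)
          - ((cf σ n * ∑ p ∈ SS d n, momt σ P p * momt σ Q p)
            - (cf σ n * ∑ p ∈ SS d n, momt σ Q p * momt σ Q p))
        = cf σ n * ∑ p ∈ SS d n, (momt σ P p - momt σ Q p) ^ 2 := by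
      intro n
      rw [← mul_sub, ← mul_sub, ← mul_sub, ← Finset.sum_sub_distrib, ← Finset.sum_sub_distrib,
        ← Finset.sum_sub_distrib]
      congr 1
      exact Finset.sum_congr rfl fun p _ => by ring
    have hs1 : Summable (fun n : ℕ => (cf σ n * ∑ p ∈ SS d n, momt σ P p * momt σ P p)
        - (cf σ n * ∑ p ∈ SS d n, momt σ Q p * momt σ P p)) := hPP.2.sub hPQ.2
    have hs2 : Summable (fun n : ℕ => (cf σ n * ∑ p ∈ SS d n, momt σ P p * momt σ Q p)
        - (cf σ n * ∑ p ∈ SS d n, momt σ Q p * momt σ Q p)) := hQP.2.sub hQQ.2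
    have hsq_sum : Summable (fun n : ℕ => cf σ n * ∑ p ∈ SS d n,
        (momt σ P p - momt σ Q p) ^ 2) := (hs1.sub hs2).congr hdiff
    have hsq : (∑' n : ℕ, cf σ n * ∑ p ∈ SS d n, (momt σ P p - momt σ Q p) ^ 2) = 0 := by
      calc (∑' n : ℕ, cf σ n * ∑ p ∈ SS d n, (momt σ P p - momt σ Q p) ^ 2)
          = ∑' n : ℕ, ((cf σ n * ∑ p ∈ SS d n, momt σ P p * momt σ P p)
            - (cf σ n * ∑ p ∈ SS d n, momt σ Q p * momt σ P p)
            - ((cf σ n * ∑ p ∈ SS d n, momt σ P p * momt σ Q p)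
              - (cf σ n * ∑ p ∈ SS d n, momt σ Q p * momt σ Q p))) :=
            tsum_congr fun n => (hdiff n).symm
        _ = (∑' n : ℕ, ((cf σ n * ∑ p ∈ SS d n, momt σ P p * momt σ P p)
            - (cf σ n * ∑ p ∈ SS d n, momt σ Q p * momt σ P p)))
            - ∑' n : ℕ, ((cf σ n * ∑ p ∈ SS d n, momt σ P p * momt σ Q p)
              - (cf σ n * ∑ p ∈ SS d n, momt σ Q p * momt σ Q p)) := Summable.tsum_sub hs1 hs2
        _ = 0 := by
            rw [Summable.tsum_sub hPP.2 hPQ.2, Summable.tsum_sub hQP.2 hQQ.2, e1, e2]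
            ring
    intro n p
    have hnn : ∀ m : ℕ, 0 ≤ cf σ m * ∑ q ∈ SS d m, (momt σ P q - momt σ Q q) ^ 2 := fun m =>
      mul_nonneg (le_of_lt (cf_pos hσ m)) (Finset.sum_nonneg fun q _ => sq_nonneg _)
    have hle := Summable.le_tsum hsq_sum n (fun m _ => hnn m)
    have hzero : cf σ n * ∑ q ∈ SS d n, (momt σ P q - momt σ Q q) ^ 2 = 0 :=
      le_antisymm (hsq ▸ hle) (hnn n)
    have hsum0 : ∑ q ∈ SS d n, (momt σ P q - momt σ Q q) ^ 2 = 0 := by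
      rcases mul_eq_zero.mp hzero with h' | h'
      · exact absurd h' (ne_of_gt (cf_pos hσ n))
      · exact h'
    have := (Finset.sum_eq_zero_iff_of_nonneg (fun q _ => sq_nonneg _)).mp hsum0 p (mem_SS p)
    have := (pow_eq_zero_iff two_ne_zero).mp this
    exact sub_eq_zero.mp this
  -- step 3 : equality of integrals of all continuous functions, via Stone-Weierstrass
  have hwc := wt_cont (Z := Z) σ
  have hmonoQ : ∀ x : C(↥Z, ℝ), x ∈ Submonoid.closure (Set.range (coordCM Z)) →
      ∃ (n : ℕ) (p : Fin n → Fin d), ∀ u, x u = mono p u := by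
    intro x hx
    induction hx using Submonoid.closure_induction with
    | mem y hy =>
        obtain ⟨i, rfl⟩ := hy
        exact ⟨1, fun _ => i, fun u => by simp [coordCM, mono]⟩
    | one => exact ⟨0, Fin.elim0, fun u => by simp [mono]⟩
    | mul x y hx hy ihx ihy =>
        obtain ⟨n, p, hp⟩ := ihx
        obtain ⟨m, q, hq⟩ := ihy
        refine ⟨n + m, Fin.append p q, fun u => ?_⟩
        rw [ContinuousMap.mul_apply, hp, hq, mono, mono, mono, Fin.prod_univ_add]
        congr 1
        · exact Finset.prod_congr rfl fun j _ => by rw [Fin.append_left]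
        · exact Finset.prod_congr rfl fun j _ => by rw [Fin.append_right]
  have hadj : ∀ f : C(↥Z, ℝ), f ∈ Algebra.adjoin ℝ (Set.range (coordCM Z)) →
      (∫ u, f u * wt σ u ∂P) = ∫ u, f u * wt σ u ∂Q := by
    intro f hf
    have hspan : f ∈ Submodule.span ℝ
        ((Submonoid.closure (Set.range (coordCM Z)) : Submonoid C(↥Z, ℝ)) : Set C(↥Z, ℝ)) := by
      rw [← Algebra.adjoin_eq_span]
      exact hf
    clear hf
    induction hspan using Submodule.span_induction with
    | mem x hx =>
        obtain ⟨n, p, hp⟩ := hmonoQ x hx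
        calc (∫ u, x u * wt σ u ∂P) = momt σ P p := by
              rw [momt]; exact integral_congr_ae (Filter.Eventually.of_forall fun u => by
                show x u * wt σ u = mono p u * wt σ u; rw [hp u])
          _ = momt σ Q p := hmomeq n p
          _ = ∫ u, x u * wt σ u ∂Q := by
              rw [momt]; exact integral_congr_ae (Filter.Eventually.of_forall fun u => by
                show mono p u * wt σ u = x u * wt σ u; rw [hp u])
    | zero => simp
    | add x y hx hy ihx ihy =>
        have e : ∀ (A : Measure ↥Z), IsFiniteMeasure A →
            (∫ u, (x + y) u * wt σ u ∂A) = (∫ u, x u * wt σ u ∂A) + ∫ u, y u * wt σ u ∂A := by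
          intro A hA
          haveI := hA
          rw [← integral_add (cont_integrable A (x.continuous.mul hwc) :
              Integrable (fun u => x u * wt σ u) A)
            (cont_integrable A (y.continuous.mul hwc) : Integrable (fun u => y u * wt σ u) A)]
          exact integral_congr_ae (Filter.Eventually.of_forall fun u => by
            simp [ContinuousMap.add_apply, add_mul])
        rw [e P inferInstance, e Q inferInstance, ihx, ihy]
    | smul r x hx ihx =>
        have e : ∀ (A : Measure ↥Z),
            (∫ u, (r • x) u * wt σ u ∂A) = r * ∫ u, x u * wt σ u ∂A := by
          intro A
          rw [← integral_const_mul]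
          exact integral_congr_ae (Filter.Eventually.of_forall fun u => by
            simp [ContinuousMap.smul_apply, mul_assoc])
        rw [e P, e Q, ihx]
  have hsep : (Algebra.adjoin ℝ (Set.range (coordCM Z))).SeparatesPoints := by
    intro x y hxy
    obtain ⟨i, hi⟩ : ∃ i, ev x i ≠ ev y i := by
      by_contra hc
      push_neg at hc
      exact hxy (Subtype.ext (PiLp.ext hc))
    exact ⟨_, ⟨coordCM Z i, Algebra.subset_adjoin ⟨i, rfl⟩, rfl⟩, hi⟩
  have hintc : ∀ (A : Measure ↥Z), IsFiniteMeasure A →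
      Continuous fun f : C(↥Z, ℝ) => ∫ u, f u * wt σ u ∂A := by
    intro A hA
    haveI := hA
    refine (LipschitzWith.of_dist_le_mul (K := (A Set.univ).toReal.toNNReal)
      (fun f g => ?_)).continuous
    have hif : Integrable (fun u => f u * wt σ u) A := cont_integrable A (f.continuous.mul hwc)
    have hig : Integrable (fun u => g u * wt σ u) A := cont_integrable A (g.continuous.mul hwc)
    rw [Real.dist_eq, ← integral_sub hif hig]
    have hb : ∀ u : ↥Z, |f u * wt σ u - g u * wt σ u| ≤ dist f g := by
      intro u
      rw [← sub_mul, abs_mul]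
      calc |f u - g u| * |wt σ u| ≤ dist f g * 1 := by
            refine mul_le_mul ?_ (wt_abs_le σ u) (abs_nonneg _) dist_nonneg
            rw [← Real.dist_eq]
            exact ContinuousMap.dist_apply_le_dist u
        _ = dist f g := mul_one _
    calc |∫ u, (f u * wt σ u - g u * wt σ u) ∂A|
        ≤ ∫ u, |f u * wt σ u - g u * wt σ u| ∂A := by
          rw [← Real.norm_eq_abs]
          refine (norm_integral_le_integral_norm _).trans (le_of_eq ?_)
          simp [Real.norm_eq_abs]
      _ ≤ ∫ _u, dist f g ∂A := integral_mono (hif.sub hig).abs (integrable_const _) hb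
      _ = (A Set.univ).toReal * dist f g := by simp [mul_comm, measureReal_def]
      _ = ((A Set.univ).toReal.toNNReal : ℝ) * dist f g := by
          rw [Real.coe_toNNReal _ ENNReal.toReal_nonneg]
  have hclosed : IsClosed {f : C(↥Z, ℝ) | (∫ u, f u * wt σ u ∂P) = ∫ u, f u * wt σ u ∂Q} :=
    isClosed_eq (hintc P inferInstance) (hintc Q inferInstance)
  have hSW := ContinuousMap.subalgebra_topologicalClosure_eq_top_of_separatesPoints _ hsep
  have hallw : ∀ f : C(↥Z, ℝ), (∫ u, f u * wt σ u ∂P) = ∫ u, f u * wt σ u ∂Q := by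
    intro f
    have hmem0 : f ∈ (Algebra.adjoin ℝ (Set.range (coordCM Z))).topologicalClosure := by
      rw [hSW]; trivial
    have hmem : f ∈ closure ((Algebra.adjoin ℝ (Set.range (coordCM Z)) :
        Subalgebra ℝ C(↥Z, ℝ)) : Set C(↥Z, ℝ)) := by
      rw [← Subalgebra.topologicalClosure_coe]
      exact hmem0
    exact closure_minimal (fun g hg => hadj g hg) hclosed hmem
  have hall : ∀ f : C(↥Z, ℝ), (∫ u, f u ∂P) = ∫ u, f u ∂Q := by
    intro f
    have h6 := hallw ⟨fun u => f u / wt σ u,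
      f.continuous.div hwc (fun u => ne_of_gt (wt_pos σ u))⟩
    simp only [ContinuousMap.coe_mk] at h6
    have h7 : ∀ u : ↥Z, f u / wt σ u * wt σ u = f u := fun u =>
      div_mul_cancel₀ _ (ne_of_gt (wt_pos σ u))
    calc (∫ u, f u ∂P) = ∫ u, f u / wt σ u * wt σ u ∂P :=
          integral_congr_ae (Filter.Eventually.of_forall fun u => (h7 u).symm)
      _ = ∫ u, f u / wt σ u * wt σ u ∂Q := h6
      _ = ∫ u, f u ∂Q := integral_congr_ae (Filter.Eventually.of_forall h7)
  refine ext_of_forall_lintegral_eq_of_IsFiniteMeasure ?_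
  intro f
  have hfc : Continuous fun u : ↥Z => (f u : ℝ) := NNReal.continuous_coe.comp f.continuous
  rw [lintegral_coe_eq_integral _ (cont_integrable P hfc),
    lintegral_coe_eq_integral _ (cont_integrable Q hfc)]
  exact congrArg ENNReal.ofReal (hall ⟨fun u => (f u : ℝ), hfc⟩)


lemma signed_apply_eq {X : Type*} [MeasurableSpace X] (t : SignedMeasure X) {i : Set X}
    (hi : MeasurableSet i) :
    t i = (t.toJordanDecomposition.posPart i).toReal
      - (t.toJordanDecomposition.negPart i).toReal := by
  conv_lhs => rw [← t.toSignedMeasure_toJordanDecomposition]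
  rw [JordanDecomposition.toSignedMeasure, Measure.toSignedMeasure_sub_apply hi, measureReal_def,
    measureReal_def]

lemma sintegral_sub {X : Type*} [MeasurableSpace X] (ν ν' : SignedMeasure X) (f : X → ℝ)
    (hf : ∀ (A : Measure X), IsFiniteMeasure A → Integrable f A) :
    sintegral (ν - ν') f = sintegral ν f - sintegral ν' f := by
  set s := ν - ν' with hs
  set A := s.toJordanDecomposition.posPart with hA
  set B := s.toJordanDecomposition.negPart with hB
  set C := ν.toJordanDecomposition.posPart with hC
  set D := ν.toJordanDecomposition.negPart with hD
  set E := ν'.toJordanDecomposition.posPart with hE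
  set F := ν'.toJordanDecomposition.negPart with hF
  have hmeas : A + D + E = B + C + F := by
    ext i hi
    have h1 := signed_apply_eq s hi
    have h2 := signed_apply_eq ν hi
    have h3 := signed_apply_eq ν' hi
    have h4 : s i = ν i - ν' i := by rw [hs, VectorMeasure.sub_apply]
    rw [← hA, ← hB] at h1
    rw [← hC, ← hD] at h2
    rw [← hE, ← hF] at h3
    have hAne : A i ≠ ⊤ := measure_ne_top _ _
    have hBne : B i ≠ ⊤ := measure_ne_top _ _
    have hCne : C i ≠ ⊤ := measure_ne_top _ _
    have hDne : D i ≠ ⊤ := measure_ne_top _ _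
    have hEne : E i ≠ ⊤ := measure_ne_top _ _
    have hFne : F i ≠ ⊤ := measure_ne_top _ _
    rw [Measure.add_apply, Measure.add_apply, Measure.add_apply, Measure.add_apply]
    apply (ENNReal.toReal_eq_toReal_iff' (by simp [ENNReal.add_ne_top, hAne, hDne, hEne])
      (by simp [ENNReal.add_ne_top, hBne, hCne, hFne])).mp
    rw [ENNReal.toReal_add (by simp [ENNReal.add_ne_top, hAne, hDne]) hEne,
      ENNReal.toReal_add hAne hDne,
      ENNReal.toReal_add (by simp [ENNReal.add_ne_top, hBne, hCne]) hFne,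
      ENNReal.toReal_add hBne hCne]
    linarith
  have hint : (∫ x, f x ∂A) + (∫ x, f x ∂D) + (∫ x, f x ∂E)
      = (∫ x, f x ∂B) + (∫ x, f x ∂C) + ∫ x, f x ∂F := by
    have h5 : ∫ x, f x ∂(A + D + E) = ∫ x, f x ∂(B + C + F) := by rw [hmeas]
    rw [integral_add_measure (hf _ inferInstance) (hf _ inferInstance),
      integral_add_measure (hf _ inferInstance) (hf _ inferInstance),
      integral_add_measure (hf _ inferInstance) (hf _ inferInstance),
      integral_add_measure (hf _ inferInstance) (hf _ inferInstance)] at h5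
    exact h5
  show (∫ x, f x ∂A) - (∫ x, f x ∂B)
      = ((∫ x, f x ∂C) - (∫ x, f x ∂D)) - ((∫ x, f x ∂E) - ∫ x, f x ∂F)
  linarith

end GKDAux

/-- For the Gaussian kernel `κ_σ` on a nonempty compact `Z ⊂ ℝ^d`:
any finite signed Borel measure `m` whose kernel embedding vanishes
(`∫ κ_σ(z,·) dm = 0` for all `z ∈ Z`) must be zero; consequently, for every Borel
probability measure `μ` on `Z`, the stationary-normalized kernel mean distance
`D_μ` is a metric on the space of finite signed Borel measures on `Z`. -/
theorem gaussian_kernel_distance_is_metric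
    {d : ℕ} (Z : Set (EuclideanSpace ℝ (Fin d)))
    (hZne : Z.Nonempty) (hZc : IsCompact Z)
    (σ : ℝ) (hσ : 0 < σ)
    (κ : ↥Z → ↥Z → ℝ)
    (hκ : ∀ z u : ↥Z, κ z u = Real.exp (-(dist z u) ^ 2 / (2 * σ ^ 2))) :
    (∀ m : SignedMeasure ↥Z, (∀ z : ↥Z, sintegral m (fun u => κ z u) = 0) → m = 0) ∧
      ∀ μ : Measure ↥Z, IsProbabilityMeasure μ →
        ∀ D : SignedMeasure ↥Z → SignedMeasure ↥Z → ℝ,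
          (∀ ν ν', D ν ν' = ⨆ z : ↥Z,
            |sintegral (ν - ν') (fun u => κ z u) / ∫ u, κ z u ∂μ|) →
          ((∀ ν ν', 0 ≤ D ν ν') ∧ (∀ ν ν', D ν ν' = D ν' ν) ∧
            (∀ ν ν' ν'', D ν ν'' ≤ D ν ν' + D ν' ν'') ∧
            (∀ ν ν', D ν ν' = 0 ↔ ν = ν')) := by
  haveI : CompactSpace ↥Z := isCompact_iff_compactSpace.mp hZc
  haveI : Nonempty ↥Z := hZne.to_subtype
  have hκc : ∀ z : ↥Z, Continuous (fun u => κ z u) := by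
    intro z
    have he : (fun u => κ z u) = fun u : ↥Z => Real.exp (-(dist z u) ^ 2 / (2 * σ ^ 2)) :=
      funext (hκ z)
    rw [he]
    exact Real.continuous_exp.comp
      ((((continuous_const.dist continuous_id).pow 2).neg).div_const _)
  have hκint : ∀ (z : ↥Z) (A : Measure ↥Z), IsFiniteMeasure A → Integrable (fun u => κ z u) A :=
    fun z A hA => by haveI := hA; exact GKDAux.cont_integrable A (hκc z)
  have part1 : ∀ m : SignedMeasure ↥Z, (∀ z : ↥Z, sintegral m (fun u => κ z u) = 0) → m = 0 := by
    intro m hm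
    have h2 : m.toJordanDecomposition.posPart = m.toJordanDecomposition.negPart := by
      apply GKDAux.measure_eq_of_kernel hZc hσ
      intro z
      have h1 : (∫ u, κ z u ∂m.toJordanDecomposition.posPart)
          = ∫ u, κ z u ∂m.toJordanDecomposition.negPart := sub_eq_zero.mp (hm z)
      simp only [hκ] at h1
      exact h1
    ext i hi
    rw [GKDAux.signed_apply_eq m hi, h2, sub_self, VectorMeasure.zero_apply]
  refine ⟨part1, ?_⟩
  intro μ hμ D hD
  obtain ⟨R0, hR0⟩ := (Metric.isBounded_iff_subset_closedBall 0).mp hZc.isBounded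
  set c0 : ℝ := Real.exp (-(2 * max R0 0) ^ 2 / (2 * σ ^ 2)) with hc0def
  have hc0 : 0 < c0 := Real.exp_pos _
  have hden : ∀ z : ↥Z, c0 ≤ ∫ u, κ z u ∂μ := by
    intro z
    have hpt : ∀ u : ↥Z, c0 ≤ κ z u := by
      intro u
      rw [hκ, hc0def]
      apply Real.exp_le_exp.mpr
      have hd : dist z u ≤ 2 * max R0 0 := by
        rw [Subtype.dist_eq]
        calc dist (z : EuclideanSpace ℝ (Fin d)) (u : EuclideanSpace ℝ (Fin d))
            ≤ dist (z : EuclideanSpace ℝ (Fin d)) 0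
              + dist (u : EuclideanSpace ℝ (Fin d)) 0 := dist_triangle_right _ _ _
          _ ≤ max R0 0 + max R0 0 := add_le_add
              ((Metric.mem_closedBall.mp (hR0 z.2)).trans (le_max_left _ _))
              ((Metric.mem_closedBall.mp (hR0 u.2)).trans (le_max_left _ _))
          _ = 2 * max R0 0 := by ring
      have h2 : (dist z u) ^ 2 ≤ (2 * max R0 0) ^ 2 := by
        apply pow_le_pow_left₀ dist_nonneg hd
      have h3 : (0:ℝ) < 2 * σ ^ 2 := by positivity
      exact (div_le_div_iff_of_pos_right h3).mpr (neg_le_neg h2)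
    calc c0 = ∫ _u, c0 ∂μ := by simp
      _ ≤ ∫ u, κ z u ∂μ := integral_mono (integrable_const _) (hκint z μ inferInstance) hpt
  have hdenpos : ∀ z : ↥Z, 0 < ∫ u, κ z u ∂μ := fun z => lt_of_lt_of_le hc0 (hden z)
  have hκle1 : ∀ z u : ↥Z, |κ z u| ≤ 1 := by
    intro z u
    rw [hκ, abs_of_pos (Real.exp_pos _), Real.exp_le_one_iff, neg_div]
    have h4 : (0:ℝ) ≤ (dist z u) ^ 2 / (2 * σ ^ 2) := by positivity
    linarith
  have hnum : ∀ (s : SignedMeasure ↥Z) (z : ↥Z), |sintegral s (fun u => κ z u)|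
      ≤ (s.toJordanDecomposition.posPart Set.univ).toReal
        + (s.toJordanDecomposition.negPart Set.univ).toReal := by
    intro s z
    have hb : ∀ (A : Measure ↥Z), IsFiniteMeasure A →
        |∫ u, κ z u ∂A| ≤ (A Set.univ).toReal := by
      intro A hA
      haveI := hA
      rw [← Real.norm_eq_abs]
      calc ‖∫ u, κ z u ∂A‖ ≤ ∫ u, ‖κ z u‖ ∂A := norm_integral_le_integral_norm _
        _ ≤ ∫ _u, (1:ℝ) ∂A := integral_mono (hκint z A hA).norm (integrable_const _)
            (fun u => by rw [Real.norm_eq_abs]; exact hκle1 z u)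
        _ = (A Set.univ).toReal := by simp [measureReal_def]
    rw [sintegral]
    calc |(∫ u, κ z u ∂s.toJordanDecomposition.posPart)
          - ∫ u, κ z u ∂s.toJordanDecomposition.negPart|
        ≤ |∫ u, κ z u ∂s.toJordanDecomposition.posPart|
          + |∫ u, κ z u ∂s.toJordanDecomposition.negPart| := abs_sub _ _
      _ ≤ _ := add_le_add (hb _ inferInstance) (hb _ inferInstance)
  have hBdd : ∀ s : SignedMeasure ↥Z,
      BddAbove (Set.range fun z : ↥Z => |sintegral s (fun u => κ z u) / ∫ u, κ z u ∂μ|) := by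
    intro s
    refine ⟨((s.toJordanDecomposition.posPart Set.univ).toReal
      + (s.toJordanDecomposition.negPart Set.univ).toReal) / c0, ?_⟩
    rintro x ⟨z, rfl⟩
    dsimp only
    rw [abs_div, abs_of_pos (hdenpos z)]
    exact div_le_div₀ (add_nonneg ENNReal.toReal_nonneg ENNReal.toReal_nonneg)
      (hnum s z) hc0 (hden z)
  refine ⟨?_, ?_, ?_, ?_⟩
  · intro ν ν'
    rw [hD]
    exact Real.iSup_nonneg fun z => abs_nonneg _
  · intro ν ν'
    rw [hD, hD]
    congr 1
    funext z
    rw [GKDAux.sintegral_sub _ _ _ (fun A hA => hκint z A hA),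
      GKDAux.sintegral_sub _ _ _ (fun A hA => hκint z A hA), ← neg_sub, neg_div, abs_neg]
  · intro ν ν' ν''
    rw [hD, hD, hD]
    refine ciSup_le fun z => ?_
    have h8 : sintegral (ν - ν'') (fun u => κ z u)
        = sintegral (ν - ν') (fun u => κ z u) + sintegral (ν' - ν'') (fun u => κ z u) := by
      rw [GKDAux.sintegral_sub _ _ _ (fun A hA => hκint z A hA),
        GKDAux.sintegral_sub _ _ _ (fun A hA => hκint z A hA),
        GKDAux.sintegral_sub _ _ _ (fun A hA => hκint z A hA)]
      ring
    calc |sintegral (ν - ν'') (fun u => κ z u) / ∫ u, κ z u ∂μ|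
        ≤ |sintegral (ν - ν') (fun u => κ z u) / ∫ u, κ z u ∂μ|
          + |sintegral (ν' - ν'') (fun u => κ z u) / ∫ u, κ z u ∂μ| := by
          rw [h8, add_div]
          exact abs_add_le _ _
      _ ≤ _ := add_le_add (le_ciSup (hBdd _) z) (le_ciSup (hBdd _) z)
  · intro ν ν'
    constructor
    · intro h0
      rw [hD] at h0
      have hz : ∀ z : ↥Z, sintegral (ν - ν') (fun u => κ z u) = 0 := by
        intro z
        have h9 : |sintegral (ν - ν') (fun u => κ z u) / ∫ u, κ z u ∂μ| ≤ 0 :=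
          h0 ▸ le_ciSup (hBdd _) z
        have h10 : sintegral (ν - ν') (fun u => κ z u) / ∫ u, κ z u ∂μ = 0 :=
          abs_eq_zero.mp (le_antisymm h9 (abs_nonneg _))
        rcases div_eq_zero_iff.mp h10 with h' | h'
        · exact h'
        · exact absurd h' (ne_of_gt (hdenpos z))
      exact sub_eq_zero.mp (part1 (ν - ν') hz)
    · rintro rfl
      rw [hD]
      calc (⨆ z : ↥Z, |sintegral (ν - ν) (fun u => κ z u) / ∫ u, κ z u ∂μ|)
          = ⨆ _z : ↥Z, (0:ℝ) := by
            congr 1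
            funext z
            rw [GKDAux.sintegral_sub _ _ _ (fun A hA => hκint z A hA), sub_self, zero_div, abs_zero]
        _ = 0 := ciSup_const
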